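/- For every computably bounded numbering φ, the halting set K is Turing reducible to MIN_φ. -/

import Mathlib

/-- A numbering: a family of partial functions `φ_e : ℕ →. ℕ` such that the
two-variable map `(e, x) ↦ φ_e x` is partial recursive. -/
def NumberingFam (φ : ℕ → ℕ →. ℕ) : Prop := Partrec₂ φ

/-- `φ` is acceptable: every numbering translates into it via a computable function. -/
def Acceptable (φ : ℕ → ℕ →. ℕ) : Prop :=
  ∀ ψ : ℕ → ℕ →. ℕ, NumberingFam ψ → ∃ f : ℕ → ℕ, Computable f ∧ ∀ e, φ (f e) = ψ e

/-- `φ` has the Kolmogorov property: every numbering translates into it with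
linearly bounded (not necessarily computable) translation. -/
def KolmogorovProperty (φ : ℕ → ℕ →. ℕ) : Prop :=
  ∀ ψ : ℕ → ℕ →. ℕ, NumberingFam ψ → ∃ c : ℕ, ∀ e, ∃ j, j ≤ c * e + c ∧ φ j = ψ e

/-- `φ` is computably bounded: every numbering translates into it with a
computable bound on the translated index. -/
def ComputablyBounded (φ : ℕ → ℕ →. ℕ) : Prop :=
  ∀ ψ : ℕ → ℕ →. ℕ, NumberingFam ψ → ∃ f : ℕ → ℕ, Computable f ∧ ∀ e, ∃ j, j ≤ f e ∧ φ j = ψ e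

/-- `φ` is polynomially bounded with degree `p`. -/
def PolyBounded (φ : ℕ → ℕ →. ℕ) (p : ℕ) : Prop :=
  ∀ ψ : ℕ → ℕ →. ℕ, NumberingFam ψ → ∃ c : ℕ, ∀ e, ∃ j, j ≤ c * e ^ p + c ∧ φ j = ψ e

/-- The set of `φ`-minimal indices. -/
def MINset (φ : ℕ → ℕ →. ℕ) : Set ℕ := {e | ∀ j < e, φ j ≠ φ e}

/-- Minimal indices of functions converging exactly on input 0. -/
def Mset (φ : ℕ → ℕ →. ℕ) : Set ℕ :=
  {e | e ∈ MINset φ ∧ (φ e 0).Dom ∧ ∀ x ≥ 1, ¬ (φ e x).Dom}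

/-- `minIndex φ e` is the minimal index computing the same function as `e`. -/
noncomputable def minIndex (φ : ℕ → ℕ →. ℕ) (e : ℕ) : ℕ := sInf {j | φ j = φ e}

/-- A partial recursive `U` is optimal: every partial recursive `V` is simulated
with only linear increase of programs. -/
def OptimalMachine (U : ℕ →. ℕ) : Prop :=
  Nat.Partrec U ∧ ∀ V : ℕ →. ℕ, Nat.Partrec V →
    ∃ c : ℕ, ∀ p, (V p).Dom → ∃ q, q ≤ c * p + c ∧ U q = V p

/-- Kolmogorov complexity of `x` with respect to `U`: the least binary length of
a `U`-program for `x`. (`Nat.size q` is the binary length of `q`.) -/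
noncomputable def Cpx (U : ℕ →. ℕ) (x : ℕ) : ℕ :=
  sInf {n | ∃ q, U q = Part.some x ∧ Nat.size q = n}

/-- Kolmogorov complexity of (the canonical code of) a finite set. -/
noncomputable def CpxFinset (U : ℕ →. ℕ) (A : Finset ℕ) : ℕ :=
  Cpx U (Encodable.encode A)

/-- `A` is `(m,k)`-recursive: a computable labelling of `k`-tuples that is
correct in at least `m` coordinates on every tuple. -/
def MKRecursive (m k : ℕ) (A : Set ℕ) : Prop :=
  ∃ f : (Fin k → ℕ) → Fin k → Bool, Computable f ∧
    ∀ x : Fin k → ℕ, m ≤ {i : Fin k | (f x i = true ↔ x i ∈ A)}.ncard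

/-- Partial recursive relative to an oracle `O : ℕ →. ℕ` (mirrors `Nat.Partrec`
with an extra base case for the oracle). -/
inductive RecursiveInOracle (O : ℕ →. ℕ) : (ℕ →. ℕ) → Prop
  | zero : RecursiveInOracle O (pure 0)
  | succ : RecursiveInOracle O ↑Nat.succ
  | left : RecursiveInOracle O ↑fun n : ℕ => n.unpair.1
  | right : RecursiveInOracle O ↑fun n : ℕ => n.unpair.2
  | oracle : RecursiveInOracle O O
  | pair {f g} : RecursiveInOracle O f → RecursiveInOracle O g →
      RecursiveInOracle O fun n => Nat.pair <$> f n <*> g n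
  | comp {f g} : RecursiveInOracle O f → RecursiveInOracle O g →
      RecursiveInOracle O fun n => g n >>= f
  | prec {f g} : RecursiveInOracle O f → RecursiveInOracle O g →
      RecursiveInOracle O (Nat.unpaired fun a n =>
        n.rec (f a) fun y IH => do let i ← IH; g (Nat.pair a (Nat.pair y i)))
  | rfind {f} : RecursiveInOracle O f →
      RecursiveInOracle O fun a => Nat.rfind fun n => (fun m => m = 0) <$> f (Nat.pair a n)

/-- The characteristic function of a set of naturals, as a partial function. -/
noncomputable def chi (A : Set ℕ) : ℕ →. ℕ :=
  fun n => Part.some (A.indicator (fun _ => 1) n)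

/-- Turing reducibility between sets of naturals: the characteristic function
of `A` is partial recursive relative to the characteristic function of `B`. -/
noncomputable def TuringLE (A B : Set ℕ) : Prop := RecursiveInOracle (chi B) (chi A)

/-- The standard acceptable numbering of the partial recursive functions,
via Gödel codes. -/
def stdNumbering (e : ℕ) : ℕ →. ℕ := (Denumerable.ofNat Nat.Partrec.Code e).eval

/-- The halting set. -/
def haltingSet : Set ℕ := {e | (stdNumbering e e).Dom}

/- ======================================================================
   Auxiliary development for the proof.
   ====================================================================== -/

namespace HaltMIN

set_option maxHeartbeats 1000000

open Nat.Partrec (Code)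
open Nat.Partrec.Code

/-! ### Basic closure properties of `RecursiveInOracle` -/

theorem recIn_of_natPartrec {O f : ℕ →. ℕ} (h : Nat.Partrec f) : RecursiveInOracle O f := by
  induction h with
  | zero => exact .zero
  | succ => exact .succ
  | left => exact .left
  | right => exact .right
  | pair _ _ ihf ihg => exact .pair ihf ihg
  | comp _ _ ihf ihg => exact .comp ihf ihg
  | prec _ _ ihf ihg => exact .prec ihf ihg
  | rfind _ ihf => exact .rfind ihf

theorem recIn_of_eq {O f g : ℕ →. ℕ} (h : RecursiveInOracle O f) (H : ∀ n, f n = g n) :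
    RecursiveInOracle O g := (funext H : f = g) ▸ h

theorem recIn_of_computable {O : ℕ →. ℕ} {g : ℕ → ℕ} (h : Computable g) :
    RecursiveInOracle O (↑g : ℕ →. ℕ) :=
  recIn_of_natPartrec (Partrec.nat_iff.1 h.partrec)

/-! ### List folding helper lemmas -/

theorem foldr_or_eq_true {l : List ℕ} {q : ℕ → Bool} :
    (l.foldr (fun x acc => acc || q x) false = true) ↔ ∃ x ∈ l, q x = true := by
  induction l with
  | nil => simp
  | cons a l ih =>
    simp only [List.foldr_cons, Bool.or_eq_true, ih, List.mem_cons]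
    constructor
    · rintro (⟨x, hx, hq⟩ | hq)
      · exact ⟨x, Or.inr hx, hq⟩
      · exact ⟨a, Or.inl rfl, hq⟩
    · rintro ⟨x, (rfl | hx), hq⟩
      · exact Or.inr hq
      · exact Or.inl ⟨x, hx, hq⟩

theorem foldr_and_eq_true {l : List ℕ} {q : ℕ → Bool} :
    (l.foldr (fun x acc => acc && q x) true = true) ↔ ∀ x ∈ l, q x = true := by
  induction l with
  | nil => simp
  | cons a l ih =>
    simp only [List.foldr_cons, Bool.and_eq_true, ih, List.mem_cons]
    constructor
    · rintro ⟨h1, h2⟩ x (rfl | hx)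
      · exact h2
      · exact h1 x hx
    · intro h
      exact ⟨fun x hx => h x (Or.inr hx), h a (Or.inl rfl)⟩

theorem le_foldr_max {l : List ℕ} {q : ℕ → ℕ} {x : ℕ} (hx : x ∈ l) :
    q x ≤ l.foldr (fun x acc => max acc (q x)) 0 := by
  induction l with
  | nil => cases hx
  | cons a l ih =>
    rcases List.mem_cons.1 hx with rfl | h
    · exact le_max_right _ _
    · exact le_trans (ih h) (le_trans (le_max_left _ _) le_rfl)

/-! ### The computable part of the reduction -/

/-- `iterSnd k w`: apply `fun v => v.unpair.2` `k` times to `w`. -/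
def iterSnd (k w : ℕ) : ℕ := Nat.rec w (fun _ ih => ih.unpair.2) k

/-- Extract the `j`-th bit from the chain `w` encoding bits `0..N`. -/
def bitAt (w N j : ℕ) : ℕ := (iterSnd (N - j) w).unpair.1

/-- `j` has "fired" by stage `t`: some `φ_j(x)`, `x ≤ t`, halts within `t` steps. -/
def fireb (c : Code) (t j : ℕ) : Bool :=
  (List.range (t + 1)).foldr
    (fun x acc => acc || (evaln t c (Nat.pair j x)).isSome) false

/-- `j` is OK at stage `t`: it is not a relevant minimal index, or it has fired. -/
def okb (c : Code) (j0 w N t j : ℕ) : Bool :=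
  (!(decide (bitAt w N j = 1))) || (decide (j = j0)) || fireb c t j

/-- All `j ≤ N` are OK at stage `t` (`m` packs `e`, `N`, `w`). -/
def allb (c : Code) (j0 m t : ℕ) : Bool :=
  (List.range (m.unpair.2.unpair.1 + 1)).foldr
    (fun j acc => acc && okb c j0 m.unpair.2.unpair.2 m.unpair.2.unpair.1 t j) true

/-- Maximum value produced by `φ_j(x)` for `x ≤ t` within `t` steps. -/
def innerMax (c : Code) (t j : ℕ) : ℕ :=
  (List.range (t + 1)).foldr
    (fun x acc => max acc ((evaln t c (Nat.pair j x)).getD 0)) 0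

/-- Maximum over all `j ≤ N` of `innerMax`. -/
def maxV (c : Code) (N t : ℕ) : ℕ :=
  (List.range (N + 1)).foldr (fun j acc => max acc (innerMax c t j)) 0

/-- Final output bit once the dovetailing stage `t` has been found. -/
def outBit (c : Code) (m t : ℕ) : ℕ :=
  cond (evaln (maxV c m.unpair.2.unpair.1 t)
      (Denumerable.ofNat Code m.unpair.1) m.unpair.1).isSome 1 0

/-- The purely computable part of the reduction. -/
def decider (c : Code) (j0 : ℕ) : ℕ →. ℕ :=
  fun m => (Nat.rfind fun t => Part.some (allb c j0 m t)).map (outBit c m)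

/-- The settling time of program `e` on input `e`. -/
def sigmaP (e : ℕ) : Part ℕ :=
  Nat.rfind fun s => Part.some (evaln s (Denumerable.ofNat Code e) e).isSome

/-- The marker numbering: `marker e` is defined exactly on `{0}`, with value the
settling time of `e`, whenever `e` halts; otherwise it is the empty function. -/
def marker (e : ℕ) : ℕ →. ℕ :=
  fun x => (sigmaP e).bind fun v => ((if x = 0 then some v else none : Option ℕ) : Part ℕ)

/-- The chain encoding the oracle's bits `0..n`. -/
noncomputable def chainC (A : Set ℕ) : ℕ → ℕ
  | 0 => Nat.pair (A.indicator (fun _ => 1) 0) 0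
  | n + 1 => Nat.pair (A.indicator (fun _ => 1) (n + 1)) (chainC A n)

/-! ### Definitional lemmas (before making things irreducible) -/

theorem iterSnd_def (k w : ℕ) :
    iterSnd k w = Nat.rec (motive := fun _ => ℕ) w (fun _ ih => ih.unpair.2) k := rfl

theorem iterSnd_zero (w : ℕ) : iterSnd 0 w = w := rfl

theorem iterSnd_succ' (k w : ℕ) : iterSnd (k + 1) w = (iterSnd k w).unpair.2 := rfl

theorem bitAt_def (w N j : ℕ) : bitAt w N j = (iterSnd (N - j) w).unpair.1 := rfl

theorem fireb_def (c : Code) (t j : ℕ) : fireb c t j =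
    (List.range (t + 1)).foldr
      (fun x acc => acc || (evaln t c (Nat.pair j x)).isSome) false := rfl

theorem okb_def (c : Code) (j0 w N t j : ℕ) : okb c j0 w N t j =
    ((!(decide (bitAt w N j = 1))) || (decide (j = j0)) || fireb c t j) := rfl

theorem allb_def (c : Code) (j0 m t : ℕ) : allb c j0 m t =
    (List.range (m.unpair.2.unpair.1 + 1)).foldr
      (fun j acc => acc && okb c j0 m.unpair.2.unpair.2 m.unpair.2.unpair.1 t j) true := rfl

theorem innerMax_def (c : Code) (t j : ℕ) : innerMax c t j =
    (List.range (t + 1)).foldr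
      (fun x acc => max acc ((evaln t c (Nat.pair j x)).getD 0)) 0 := rfl

theorem maxV_def (c : Code) (N t : ℕ) : maxV c N t =
    (List.range (N + 1)).foldr (fun j acc => max acc (innerMax c t j)) 0 := rfl

theorem outBit_def (c : Code) (m t : ℕ) : outBit c m t =
    cond (evaln (maxV c m.unpair.2.unpair.1 t)
      (Denumerable.ofNat Code m.unpair.1) m.unpair.1).isSome 1 0 := rfl

attribute [irreducible] iterSnd bitAt fireb allb innerMax maxV

/-! ### Computability of the pieces -/

theorem iterSnd_primrec : Primrec₂ iterSnd := by
  have h : Primrec₂ fun (w k : ℕ) =>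
      Nat.rec (motive := fun _ => ℕ) w (fun _ ih => ih.unpair.2) k :=
    Primrec.nat_rec Primrec.id
      ((Primrec.snd.comp (Primrec.unpair.comp (Primrec.snd.comp Primrec.snd))).to₂)
  exact Primrec.of_eq h.swap fun p => (iterSnd_def p.1 p.2).symm

theorem bitAt_primrec : Primrec fun p : ℕ × ℕ × ℕ => bitAt p.1 p.2.1 p.2.2 := by
  have h : Primrec fun p : ℕ × ℕ × ℕ => iterSnd (p.2.1 - p.2.2) p.1 :=
    iterSnd_primrec.comp
      (Primrec.nat_sub.comp (Primrec.fst.comp Primrec.snd) (Primrec.snd.comp Primrec.snd))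
      Primrec.fst
  exact Primrec.of_eq (Primrec.fst.comp (Primrec.unpair.comp h)) fun p =>
    (bitAt_def p.1 p.2.1 p.2.2).symm

theorem fireb_primrec (c : Code) : Primrec₂ (fireb c) := by
  have hl : Primrec fun a : ℕ × ℕ => List.range (a.1 + 1) :=
    Primrec.list_range.comp (Primrec.succ.comp Primrec.fst)
  have hstep : Primrec₂ fun (a : ℕ × ℕ) (p : ℕ × Bool) =>
      p.2 || (evaln a.1 c (Nat.pair a.2 p.1)).isSome := by
    have hev : Primrec fun q : (ℕ × ℕ) × ℕ × Bool =>
        (evaln q.1.1 c (Nat.pair q.1.2 q.2.1)).isSome :=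
      Primrec.option_isSome.comp (primrec_evaln.comp
        (((Primrec.fst.comp Primrec.fst).pair (Primrec.const c)).pair
          (Primrec₂.natPair.comp (Primrec.snd.comp Primrec.fst)
            (Primrec.fst.comp Primrec.snd))))
    exact (Primrec.or.comp (Primrec.snd.comp Primrec.snd) hev).to₂
  exact Primrec.of_eq (Primrec.list_foldr hl (Primrec.const false) hstep) fun p =>
    (fireb_def c p.1 p.2).symm

theorem allb_primrec (c : Code) (j0 : ℕ) : Primrec₂ (allb c j0) := by
  have hN : Primrec fun a : ℕ × ℕ => a.1.unpair.2.unpair.1 :=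
    Primrec.fst.comp (Primrec.unpair.comp
      (Primrec.snd.comp (Primrec.unpair.comp Primrec.fst)))
  have hw : Primrec fun a : ℕ × ℕ => a.1.unpair.2.unpair.2 :=
    Primrec.snd.comp (Primrec.unpair.comp
      (Primrec.snd.comp (Primrec.unpair.comp Primrec.fst)))
  have hl : Primrec fun a : ℕ × ℕ => List.range (a.1.unpair.2.unpair.1 + 1) :=
    Primrec.list_range.comp (Primrec.succ.comp hN)
  have hstep : Primrec₂ fun (a : ℕ × ℕ) (p : ℕ × Bool) =>
      p.2 && okb c j0 a.1.unpair.2.unpair.2 a.1.unpair.2.unpair.1 a.2 p.1 := by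
    have hg : Primrec fun q : (ℕ × ℕ) × ℕ × Bool =>
        (q.1.1.unpair.2.unpair.2, q.1.1.unpair.2.unpair.1, q.2.1) :=
      (hw.comp Primrec.fst).pair ((hN.comp Primrec.fst).pair (Primrec.fst.comp Primrec.snd))
    have hbit : Primrec fun q : (ℕ × ℕ) × ℕ × Bool =>
        bitAt q.1.1.unpair.2.unpair.2 q.1.1.unpair.2.unpair.1 q.2.1 :=
      bitAt_primrec.comp hg
    have h1 : Primrec fun q : (ℕ × ℕ) × ℕ × Bool =>
        !(decide (bitAt q.1.1.unpair.2.unpair.2 q.1.1.unpair.2.unpair.1 q.2.1 = 1)) :=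
      Primrec.not.comp (Primrec.eq.comp hbit (Primrec.const 1)).decide
    have h2 : Primrec fun q : (ℕ × ℕ) × ℕ × Bool => decide (q.2.1 = j0) :=
      (Primrec.eq.comp (Primrec.fst.comp Primrec.snd) (Primrec.const j0)).decide
    have h3 : Primrec fun q : (ℕ × ℕ) × ℕ × Bool => fireb c q.1.2 q.2.1 :=
      (fireb_primrec c).comp (Primrec.snd.comp Primrec.fst)
        (Primrec.fst.comp Primrec.snd)
    exact (Primrec.and.comp (Primrec.snd.comp Primrec.snd)
      (Primrec.or.comp (Primrec.or.comp h1 h2) h3)).to₂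
  exact Primrec.of_eq (Primrec.list_foldr hl (Primrec.const true) hstep) fun p =>
    (allb_def c j0 p.1 p.2).symm

theorem innerMax_primrec (c : Code) : Primrec₂ (innerMax c) := by
  have hl : Primrec fun a : ℕ × ℕ => List.range (a.1 + 1) :=
    Primrec.list_range.comp (Primrec.succ.comp Primrec.fst)
  have hstep : Primrec₂ fun (a : ℕ × ℕ) (p : ℕ × ℕ) =>
      max p.2 ((evaln a.1 c (Nat.pair a.2 p.1)).getD 0) := by
    have hev : Primrec fun q : (ℕ × ℕ) × ℕ × ℕ =>
        (evaln q.1.1 c (Nat.pair q.1.2 q.2.1)).getD 0 :=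
      Primrec.option_getD.comp (primrec_evaln.comp
        (((Primrec.fst.comp Primrec.fst).pair (Primrec.const c)).pair
          (Primrec₂.natPair.comp (Primrec.snd.comp Primrec.fst)
            (Primrec.fst.comp Primrec.snd)))) (Primrec.const 0)
    exact (Primrec.nat_max.comp (Primrec.snd.comp Primrec.snd) hev).to₂
  exact Primrec.of_eq (Primrec.list_foldr hl (Primrec.const 0) hstep) fun p =>
    (innerMax_def c p.1 p.2).symm

theorem maxV_primrec (c : Code) : Primrec₂ (maxV c) := by
  have hl : Primrec fun a : ℕ × ℕ => List.range (a.1 + 1) :=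
    Primrec.list_range.comp (Primrec.succ.comp Primrec.fst)
  have hstep : Primrec₂ fun (a : ℕ × ℕ) (p : ℕ × ℕ) =>
      max p.2 (innerMax c a.2 p.1) :=
    (Primrec.nat_max.comp (Primrec.snd.comp Primrec.snd)
      ((innerMax_primrec c).comp (Primrec.snd.comp Primrec.fst)
        (Primrec.fst.comp Primrec.snd))).to₂
  exact Primrec.of_eq (Primrec.list_foldr hl (Primrec.const 0) hstep) fun p =>
    (maxV_def c p.1 p.2).symm

theorem outBit_primrec (c : Code) : Primrec₂ (outBit c) := by
  have hN : Primrec fun a : ℕ × ℕ => a.1.unpair.2.unpair.1 :=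
    Primrec.fst.comp (Primrec.unpair.comp
      (Primrec.snd.comp (Primrec.unpair.comp Primrec.fst)))
  have he : Primrec fun a : ℕ × ℕ => a.1.unpair.1 :=
    Primrec.fst.comp (Primrec.unpair.comp Primrec.fst)
  have hev : Primrec fun a : ℕ × ℕ =>
      (evaln (maxV c a.1.unpair.2.unpair.1 a.2)
        (Denumerable.ofNat Code a.1.unpair.1) a.1.unpair.1).isSome :=
    Primrec.option_isSome.comp (primrec_evaln.comp
      ((((maxV_primrec c).comp hN Primrec.snd).pair
        ((Primrec.ofNat Code).comp he)).pair he))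
  exact (Primrec.cond hev (Primrec.const 1) (Primrec.const 0)).to₂

theorem decider_partrec (c : Code) (j0 : ℕ) : Partrec (decider c j0) := by
  have h1 : Partrec₂ fun (m t : ℕ) => (Part.some (allb c j0 m t) : Part Bool) :=
    (allb_primrec c j0).to_comp.partrec₂
  exact (Partrec.rfind h1).map (outBit_primrec c).to_comp

theorem sigmaP_partrec : Partrec sigmaP := by
  have h : Primrec₂ fun (e s : ℕ) => (evaln s (Denumerable.ofNat Code e) e).isSome :=
    (Primrec.option_isSome.comp (primrec_evaln.comp
      ((Primrec.snd.pair ((Primrec.ofNat Code).comp Primrec.fst)).pair Primrec.fst))).to₂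
  exact Partrec.rfind h.to_comp.partrec₂

theorem marker_numbering : NumberingFam marker := by
  have hg : Partrec₂ fun (p : ℕ × ℕ) (v : ℕ) =>
      ((if p.2 = 0 then some v else none : Option ℕ) : Part ℕ) := by
    have : Primrec fun q : (ℕ × ℕ) × ℕ =>
        (if q.1.2 = 0 then some q.2 else none : Option ℕ) :=
      Primrec.ite (Primrec.eq.comp (Primrec.snd.comp Primrec.fst) (Primrec.const 0))
        (Primrec.option_some.comp Primrec.snd) (Primrec.const none)
    exact (Computable.ofOption this.to_comp).to₂
  exact Partrec.bind (sigmaP_partrec.comp Computable.fst) hg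

/-! ### Arithmetic / semantic lemmas about the pieces -/

theorem fireb_iff {c : Code} {t j : ℕ} :
    fireb c t j = true ↔ ∃ x ≤ t, (evaln t c (Nat.pair j x)).isSome := by
  rw [fireb_def, foldr_or_eq_true]
  constructor
  · rintro ⟨x, hx, hq⟩
    exact ⟨x, Nat.lt_succ_iff.1 (List.mem_range.1 hx), hq⟩
  · rintro ⟨x, hx, hq⟩
    exact ⟨x, List.mem_range.2 (Nat.lt_succ_of_le hx), hq⟩

theorem fireb_mono {c : Code} {t t' j : ℕ} (h : t ≤ t') (hf : fireb c t j = true) :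
    fireb c t' j = true := by
  rw [fireb_iff] at hf ⊢
  obtain ⟨x, hx, hq⟩ := hf
  obtain ⟨a, ha⟩ := Option.isSome_iff_exists.1 hq
  refine ⟨x, le_trans hx h, Option.isSome_iff_exists.2 ⟨a, ?_⟩⟩
  exact evaln_mono h ha

theorem iterSnd_chainC (A : Set ℕ) :
    ∀ k n, k ≤ n → iterSnd k (chainC A n) = chainC A (n - k) := by
  intro k
  induction k with
  | zero => intro n _; rw [iterSnd_zero]; simp
  | succ k ih =>
    intro n h
    have hk : k ≤ n := le_of_lt h
    rw [iterSnd_succ', ih n hk]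
    obtain ⟨m, hm⟩ : ∃ m, n - k = m + 1 := ⟨n - (k + 1), by omega⟩
    rw [hm]
    have : m = n - (k + 1) := by omega
    simp [chainC, Nat.unpair_pair, this]

theorem chainC_unpair_fst (A : Set ℕ) (n : ℕ) :
    (chainC A n).unpair.1 = A.indicator (fun _ => 1) n := by
  cases n <;> simp [chainC, Nat.unpair_pair]

theorem bitAt_chainC (A : Set ℕ) {N j : ℕ} (h : j ≤ N) :
    bitAt (chainC A N) N j = A.indicator (fun _ => 1) j := by
  rw [bitAt_def, iterSnd_chainC A (N - j) N (Nat.sub_le _ _)]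
  have : N - (N - j) = j := by omega
  rw [this, chainC_unpair_fst]

theorem bitAt_chainC_iff (A : Set ℕ) {N j : ℕ} (h : j ≤ N) :
    bitAt (chainC A N) N j = 1 ↔ j ∈ A := by
  rw [bitAt_chainC A h]
  by_cases hj : j ∈ A
  · simp [Set.indicator_of_mem hj, hj]
  · simp [Set.indicator_of_notMem hj, hj]

/-! ### The marker numbering and the halting set -/

theorem halting_iff_sigma_dom {e : ℕ} : e ∈ haltingSet ↔ (sigmaP e).Dom := by
  constructor
  · intro h
    obtain ⟨a, ha⟩ := Part.dom_iff_mem.1 h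
    obtain ⟨k, hk⟩ := evaln_complete.1 ha
    refine Nat.rfind_dom.2 ⟨k, ?_, fun {_} _ => trivial⟩
    have hs : (evaln k (Denumerable.ofNat Code e) e).isSome = true :=
      Option.isSome_iff_exists.2 ⟨a, hk⟩
    exact Part.mem_some_iff.2 hs.symm
  · intro h
    set s := (sigmaP e).get h with hs
    have hmem : s ∈ sigmaP e := Part.get_mem h
    have := Nat.rfind_spec hmem
    have hsome : (evaln s (Denumerable.ofNat Code e) e).isSome = true :=
      (Part.mem_some_iff.1 this).symm
    obtain ⟨a, ha⟩ := Option.isSome_iff_exists.1 hsome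
    exact Part.dom_iff_mem.2 ⟨a, evaln_sound ha⟩

theorem sigma_mem_halt {e v : ℕ} (hv : v ∈ sigmaP e) :
    (evaln v (Denumerable.ofNat Code e) e).isSome = true :=
  (Part.mem_some_iff.1 (Nat.rfind_spec hv)).symm

theorem marker_zero_mem {e v : ℕ} (hv : v ∈ sigmaP e) : v ∈ marker e 0 := by
  refine Part.mem_bind_iff.2 ⟨v, hv, ?_⟩
  simp

theorem marker_ne_bot {e : ℕ} (h : e ∈ haltingSet) :
    marker e ≠ fun _ => Part.none := by
  intro heq
  have hd := halting_iff_sigma_dom.1 h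
  have hv := Part.get_mem hd
  have := marker_zero_mem hv
  rw [heq] at this
  exact Part.notMem_none _ this

/-! ### Correctness of the decider -/

theorem decider_correct (φ : ℕ → ℕ →. ℕ) (c : Code)
    (hc : ∀ j x : ℕ, eval c (Nat.pair j x) = φ j x)
    (j0 : ℕ) (hj0 : φ j0 = fun _ => Part.none)
    (hj0min : ∀ j, φ j = (fun _ => Part.none) → j0 ≤ j)
    (e N w : ℕ)
    (hbits : ∀ j ≤ N, (bitAt w N j = 1 ↔ j ∈ MINset φ))
    (hmark : e ∈ haltingSet → ∃ j, j ≤ N ∧ φ j = marker e) :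
    decider c j0 (Nat.pair e (Nat.pair N w)) = chi haltingSet e := by
  -- every relevant minimal index eventually fires
  have hfire1 : ∀ j, j ∈ MINset φ → j ≠ j0 → ∃ t, fireb c t j = true := by
    intro j hjmin hjne
    have hnb : φ j ≠ fun _ => Part.none := by
      intro heq
      have hle := hj0min j heq
      rcases lt_or_eq_of_le hle with hlt | hEq
      · exact hjmin j0 hlt (by rw [hj0, heq])
      · exact hjne hEq.symm
    have hx : ∃ x, φ j x ≠ Part.none := by
      by_contra hcon
      push_neg at hcon
      exact hnb (funext fun x => hcon x)
    obtain ⟨x, hxne⟩ := hx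
    obtain ⟨a, ha⟩ := Part.ne_none_iff.1 hxne
    have haev : a ∈ eval c (Nat.pair j x) := by rw [hc]; rw [ha]; exact Part.mem_some _
    obtain ⟨k, hk⟩ := evaln_complete.1 haev
    refine ⟨max k x, fireb_iff.2 ⟨x, le_max_right _ _, ?_⟩⟩
    exact Option.isSome_iff_exists.2 ⟨a, evaln_mono (le_max_left _ _) hk⟩
  have hterm : ∀ n, ∃ t, ∀ j, j ≤ n → j ∈ MINset φ → j ≠ j0 → fireb c t j = true := by
    intro n
    induction n with
    | zero =>
      by_cases h0 : 0 ∈ MINset φ ∧ 0 ≠ j0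
      · obtain ⟨t, ht⟩ := hfire1 0 h0.1 h0.2
        refine ⟨t, fun j hj h1 h2 => ?_⟩
        have hj0' : j = 0 := Nat.le_zero.1 hj
        subst hj0'
        exact ht
      · refine ⟨0, fun j hj h1 h2 => ?_⟩
        have hj0' : j = 0 := Nat.le_zero.1 hj
        subst hj0'
        exact absurd ⟨h1, h2⟩ h0
    | succ n ih =>
      obtain ⟨t1, h1⟩ := ih
      by_cases hs : (n + 1) ∈ MINset φ ∧ (n + 1) ≠ j0
      · obtain ⟨t2, h2⟩ := hfire1 (n + 1) hs.1 hs.2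
        refine ⟨max t1 t2, fun j hj hm hne => ?_⟩
        rcases Nat.eq_or_lt_of_le hj with rfl | hlt
        · exact fireb_mono (le_max_right _ _) h2
        · exact fireb_mono (le_max_left _ _) (h1 j (Nat.lt_succ_iff.1 hlt) hm hne)
      · refine ⟨t1, fun j hj hm hne => ?_⟩
        rcases Nat.eq_or_lt_of_le hj with rfl | hlt
        · exact absurd ⟨hm, hne⟩ hs
        · exact h1 j (Nat.lt_succ_iff.1 hlt) hm hne
  -- abbreviations for the packed input
  set m : ℕ := Nat.pair e (Nat.pair N w) with hmdef
  have hm1 : m.unpair.1 = e := by rw [hmdef, Nat.unpair_pair]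
  have hm2 : m.unpair.2.unpair.1 = N := by rw [hmdef, Nat.unpair_pair, Nat.unpair_pair]
  have hm3 : m.unpair.2.unpair.2 = w := by rw [hmdef, Nat.unpair_pair, Nat.unpair_pair]
  -- the dovetailing search terminates
  have hallb : ∃ t, allb c j0 m t = true := by
    obtain ⟨t, ht⟩ := hterm N
    refine ⟨t, ?_⟩
    rw [allb_def, hm2, hm3, foldr_and_eq_true]
    intro j hj
    have hjN : j ≤ N := Nat.lt_succ_iff.1 (List.mem_range.1 hj)
    rw [okb_def]
    by_cases hb : bitAt w N j = 1
    · by_cases hje : j = j0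
      · simp [hje]
      · have := ht j hjN ((hbits j hjN).1 hb) hje
        simp [this]
    · simp [hb]
  obtain ⟨t0, ht0⟩ := hallb
  have hdom : (Nat.rfind fun t => Part.some (allb c j0 m t)).Dom :=
    Nat.rfind_dom.2 ⟨t0, Part.mem_some_iff.2 ht0.symm, fun {_} _ => trivial⟩
  set T := (Nat.rfind fun t => Part.some (allb c j0 m t)).get hdom with hTdef
  have hT : T ∈ Nat.rfind fun t => Part.some (allb c j0 m t) := Part.get_mem hdom
  have hTall : allb c j0 m T = true := (Part.mem_some_iff.1 (Nat.rfind_spec hT)).symm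
  have hdec : decider c j0 m = Part.some (outBit c m T) :=
    Part.eq_some_iff.2 (Part.mem_map _ hT)
  rw [hdec]
  simp only [chi]
  congr 1
  rw [outBit_def, hm1, hm2]
  by_cases he : e ∈ haltingSet
  · -- the marker's minimal index fired, giving a value ≥ the settling time
    rw [Set.indicator_of_mem he]
    obtain ⟨jw, hjwle, hjw⟩ := hmark he
    have hSne : Set.Nonempty {j | φ j = marker e} := ⟨jw, hjw⟩
    set m0 := sInf {j | φ j = marker e} with hm0def
    have hm0 : φ m0 = marker e := Nat.sInf_mem hSne
    have hm0le : m0 ≤ N := le_trans (Nat.sInf_le hjw) hjwle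
    have hm0MIN : m0 ∈ MINset φ := by
      intro i hi heq
      exact Nat.notMem_of_lt_sInf hi (heq.trans hm0)
    have hm0ne : m0 ≠ j0 := by
      intro hEq
      apply marker_ne_bot he
      rw [← hm0, hEq, hj0]
    -- extract the firing of m0 from allb
    have hok : okb c j0 w N T m0 = true := by
      rw [allb_def, hm2, hm3, foldr_and_eq_true] at hTall
      exact hTall m0 (List.mem_range.2 (Nat.lt_succ_of_le hm0le))
    have hfired : fireb c T m0 = true := by
      rw [okb_def] at hok
      have hb : bitAt w N m0 = 1 := (hbits m0 hm0le).2 hm0MIN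
      simpa [hb, hm0ne] using hok
    obtain ⟨x, hxle, hxsome⟩ := fireb_iff.1 hfired
    obtain ⟨a, ha⟩ := Option.isSome_iff_exists.1 hxsome
    have haev : a ∈ eval c (Nat.pair m0 x) := evaln_sound ha
    have hamem : a ∈ marker e x := by rw [← hm0, ← hc]; exact haev
    obtain ⟨v, hv, hav⟩ := Part.mem_bind_iff.1 hamem
    by_cases hx0 : x = 0
    · subst hx0
      simp only [if_pos rfl] at hav
      have hva : a = v := by simpa using hav
      subst hva
      -- now a ∈ sigmaP e, and a is bounded by maxV
      have hgd : (evaln T c (Nat.pair m0 0)).getD 0 = a := by rw [ha]; rfl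
      have hle1 : a ≤ innerMax c T m0 := by
        rw [← hgd, innerMax_def]
        exact le_foldr_max (q := fun x => (evaln T c (Nat.pair m0 x)).getD 0)
          (List.mem_range.2 (Nat.succ_pos _))
      have hle2 : innerMax c T m0 ≤ maxV c N T := by
        rw [maxV_def]
        exact le_foldr_max (q := fun j => innerMax c T j)
          (List.mem_range.2 (Nat.lt_succ_of_le hm0le))
      have hlev : a ≤ maxV c N T := le_trans hle1 hle2
      have hsome : (evaln a (Denumerable.ofNat Code e) e).isSome = true :=
        sigma_mem_halt hv
      obtain ⟨b, hb⟩ := Option.isSome_iff_exists.1 hsome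
      have hb2 := evaln_mono hlev hb
      rw [Option.isSome_iff_exists.2 ⟨b, hb2⟩]
      rfl
    · exfalso
      rw [if_neg hx0] at hav
      simp at hav
  · -- no halting: the output is 0
    rw [Set.indicator_of_notMem he]
    have : ¬(evaln (maxV c N T) (Denumerable.ofNat Code e) e).isSome = true := by
      intro hsome
      obtain ⟨a, ha⟩ := Option.isSome_iff_exists.1 hsome
      exact he (Part.dom_iff_mem.2 ⟨a, evaln_sound ha⟩)
    rw [Bool.not_eq_true] at this
    rw [this]
    rfl

/-! ### Oracle-side construction: the chain of oracle bits -/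

theorem recIn_chain {O : ℕ →. ℕ} {A : Set ℕ}
    (hOA : ∀ n : ℕ, O n = Part.some (A.indicator (fun _ => 1) n)) :
    RecursiveInOracle O fun p : ℕ => Part.some (chainC A p.unpair.2) := by
  have hy : Computable (fun z : ℕ => z.unpair.2.unpair.1 + 1) :=
    (Primrec.succ.comp (Primrec.fst.comp (Primrec.unpair.comp
      (Primrec.snd.comp Primrec.unpair)))).to_comp
  have hi : Computable (fun z : ℕ => z.unpair.2.unpair.2) :=
    (Primrec.snd.comp (Primrec.unpair.comp (Primrec.snd.comp Primrec.unpair))).to_comp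
  have hfb : RecursiveInOracle O fun n : ℕ =>
      Nat.pair <$> ((pure 0 : ℕ →. ℕ) n >>= O) <*> (pure 0 : ℕ →. ℕ) n :=
    .pair (.comp .oracle .zero) .zero
  have hgs : RecursiveInOracle O fun z : ℕ =>
      Nat.pair <$> ((↑(fun z : ℕ => z.unpair.2.unpair.1 + 1) : ℕ →. ℕ) z >>= O) <*>
        (↑(fun z : ℕ => z.unpair.2.unpair.2) : ℕ →. ℕ) z :=
    .pair (.comp .oracle (recIn_of_computable hy)) (recIn_of_computable hi)
  have hCp := RecursiveInOracle.prec hfb hgs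
  apply recIn_of_eq hCp
  intro p
  simp only [Nat.unpaired]
  generalize p.unpair.2 = n
  induction n with
  | zero =>
    show Nat.pair <$> ((pure 0 : ℕ →. ℕ) _ >>= O) <*> (pure 0 : ℕ →. ℕ) _ = _
    have h0 : (pure 0 : ℕ →. ℕ) p.unpair.1 = Part.some 0 := rfl
    rw [h0]
    simp [hOA, Seq.seq, chainC]
    have hb : (Part.some 0 >>= O) = O 0 := Part.bind_some 0 O
    rw [hb, hOA]
    simp
  | succ n ih =>
    show (Nat.rec _ _ n : Part ℕ) >>= _ = _
    rw [ih]
    show Part.some (chainC A n) >>= (fun i => Nat.pair <$>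
      ((↑(fun z : ℕ => z.unpair.2.unpair.1 + 1) : ℕ →. ℕ) _ >>= O) <*>
        (↑(fun z : ℕ => z.unpair.2.unpair.2) : ℕ →. ℕ) _) = _
    simp only [Part.bind_eq_bind, Part.bind_some]
    have h1 : (↑(fun z : ℕ => z.unpair.2.unpair.1 + 1) : ℕ →. ℕ)
        (Nat.pair p.unpair.1 (Nat.pair n (chainC A n))) = Part.some (n + 1) := by
      simp [Nat.unpair_pair]
    have h2 : (↑(fun z : ℕ => z.unpair.2.unpair.2) : ℕ →. ℕ)
        (Nat.pair p.unpair.1 (Nat.pair n (chainC A n))) = Part.some (chainC A n) := by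
      simp [Nat.unpair_pair]
    rw [h1, h2]
    simp [hOA, Seq.seq, chainC]
    have hb : (Part.some (n + 1) >>= O) = O (n + 1) := Part.bind_some (n + 1) O
    rw [hb, hOA]
    simp

end HaltMIN
open HaltMIN Nat.Partrec.Code in
open Nat.Partrec (Code) in
/-- For every computably bounded numbering, the halting set is Turing reducible
to `MIN_φ`. -/
theorem halting_turing_reducible_to_MIN
    (φ : ℕ → ℕ →. ℕ) (hφ : NumberingFam φ) (hcb : ComputablyBounded φ) :
    TuringLE haltingSet (MINset φ) := by
  classical
  -- translate the marker numbering and the empty numbering into φ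
  obtain ⟨F, hFcomp, hFspec⟩ := hcb marker marker_numbering
  have hbotnum : NumberingFam (fun _ _ => (Part.none : Part ℕ)) := Partrec.none
  obtain ⟨F2, _, hbot⟩ := hcb _ hbotnum
  obtain ⟨jb, _, hjb⟩ := hbot 0
  have hSbot : Set.Nonempty {j | φ j = fun _ => Part.none} := ⟨jb, hjb⟩
  have hj0 : φ (sInf {j | φ j = fun _ => Part.none}) = fun _ => Part.none :=
    Nat.sInf_mem hSbot
  set j0 := sInf {j | φ j = fun _ => Part.none} with hj0def
  have hj0min : ∀ j, φ j = (fun _ => Part.none) → j0 ≤ j := fun j hj => Nat.sInf_le hj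
  -- a code for φ
  have hφ' : Partrec fun n : ℕ => φ n.unpair.1 n.unpair.2 :=
    Partrec.comp hφ Primrec.unpair.to_comp
  obtain ⟨c, hc⟩ := exists_code.1 (Partrec.nat_iff.1 hφ')
  have hc' : ∀ j x : ℕ, eval c (Nat.pair j x) = φ j x := by
    intro j x
    have := congrFun hc (Nat.pair j x)
    simpa [Nat.unpair_pair] using this
  -- the oracle
  set O := chi (MINset φ) with hOdef
  have hOA : ∀ n : ℕ, O n = Part.some ((MINset φ).indicator (fun _ => 1) n) :=
    fun n => rfl
  -- assemble the input for the decider, using the oracle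
  have hchain := recIn_chain (O := O) (A := MINset φ) hOA
  have hpre : Computable (fun e : ℕ => Nat.pair 0 (F e)) :=
    Primrec₂.natPair.to_comp.comp (Computable.const 0) hFcomp
  have htri1 : RecursiveInOracle O fun e : ℕ =>
      (↑(fun e : ℕ => Nat.pair 0 (F e)) : ℕ →. ℕ) e >>=
        fun p : ℕ => Part.some (chainC (MINset φ) p.unpair.2) :=
    .comp hchain (recIn_of_computable hpre)
  have htri2 : RecursiveInOracle O fun e : ℕ =>
      Nat.pair <$> (↑F : ℕ →. ℕ) e <*>
        ((↑(fun e : ℕ => Nat.pair 0 (F e)) : ℕ →. ℕ) e >>=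
          fun p : ℕ => Part.some (chainC (MINset φ) p.unpair.2)) :=
    .pair (recIn_of_computable hFcomp) htri1
  have htri3 : RecursiveInOracle O fun e : ℕ =>
      Nat.pair <$> (↑(fun e : ℕ => e) : ℕ →. ℕ) e <*>
        (Nat.pair <$> (↑F : ℕ →. ℕ) e <*>
          ((↑(fun e : ℕ => Nat.pair 0 (F e)) : ℕ →. ℕ) e >>=
            fun p : ℕ => Part.some (chainC (MINset φ) p.unpair.2))) :=
    .pair (recIn_of_computable Computable.id) htri2
  have htri : RecursiveInOracle O fun e : ℕ =>
      Part.some (Nat.pair e (Nat.pair (F e) (chainC (MINset φ) (F e)))) := by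
    apply recIn_of_eq htri3
    intro e
    have h1 : (↑(fun e : ℕ => Nat.pair 0 (F e)) : ℕ →. ℕ) e
        = Part.some (Nat.pair 0 (F e)) := rfl
    have h2 : (↑F : ℕ →. ℕ) e = Part.some (F e) := rfl
    have h3 : (↑(fun e : ℕ => e) : ℕ →. ℕ) e = Part.some e := rfl
    rw [h1, h2, h3]
    simp [Seq.seq, Nat.unpair_pair]
  -- compose with the decider
  have hdecnat : Nat.Partrec (decider c j0) := Partrec.nat_iff.1 (decider_partrec c j0)
  have hfinal : RecursiveInOracle O fun e : ℕ =>
      (fun e : ℕ => Part.some (Nat.pair e (Nat.pair (F e) (chainC (MINset φ) (F e))))) e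
        >>= decider c j0 :=
    .comp (recIn_of_natPartrec hdecnat) htri
  show RecursiveInOracle O (chi haltingSet)
  apply recIn_of_eq hfinal
  intro e
  simp only [Part.bind_eq_bind, Part.bind_some]
  have hbitsE : ∀ j ≤ F e,
      (bitAt (chainC (MINset φ) (F e)) (F e) j = 1 ↔ j ∈ MINset φ) :=
    fun j hj => bitAt_chainC_iff (MINset φ) hj
  have hmarkE : e ∈ haltingSet → ∃ j, j ≤ F e ∧ φ j = marker e := fun _ => hFspec e
  exact (Part.bind_some _ _).trans <| decider_correct φ c hc' j0 hj0 hj0min e (F e) (chainC (MINset φ) (F e)) hbitsE hmarkE
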